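/- (Validity of transferred optimality cuts.) Let Q be a symmetric positive definite n×n real matrix, A an m×n real matrix, C a p×n real matrix, and x_g ∈ ℝⁿ. Let μ* ∈ ℝᵐ and π* ∈ ℝᵖ with π* ≥ 0 componentwise, and let b* ∈ ℝᵐ, d* ∈ ℝᵖ, v* ∈ ℝ be such that strong duality holds at the construction point: v* = −¼ w*ᵀQ⁻¹w* + x_gᵀw* − b*ᵀμ* − d*ᵀπ*, where w* := Aᵀμ* + Cᵀπ*. Define c* := v* + b*ᵀμ* + d*ᵀπ*. Then for every b' ∈ ℝᵐ, d' ∈ ℝᵖ and every x ∈ ℝⁿ with Ax = b' and C x ≤ d' (componentwise), one has c* − b'ᵀμ* − d'ᵀπ* ≤ (x − x_g)ᵀQ(x − x_g). In particular, the dual gap v(b', d') − (c* − b'ᵀμ* − d'ᵀπ*) is nonnegative whenever the subproblem with right-hand sides (b', d') is feasible, where v(b', d') denotes its optimal value. -/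

import Mathlib

open Matrix

lemma quad_key {n : ℕ} (Q : Matrix (Fin n) (Fin n) ℝ) (hQsym : Q.IsSymm) (hQpd : Q.PosDef)
    (y w : Fin n → ℝ) :
    0 ≤ y ⬝ᵥ (Q *ᵥ y) + w ⬝ᵥ y + (1/4 : ℝ) * (w ⬝ᵥ (Q⁻¹ *ᵥ w)) := by
  have hinv : Q * Q⁻¹ = 1 := Q.mul_nonsing_inv (isUnit_iff_ne_zero.mpr hQpd.det_pos.ne')
  have hQiw : Q *ᵥ (Q⁻¹ *ᵥ w) = w := by
    rw [Matrix.mulVec_mulVec, hinv, Matrix.one_mulVec]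
  set c : Fin n → ℝ := (1/2 : ℝ) • (Q⁻¹ *ᵥ w) with hc
  have hz : 0 ≤ (y + c) ⬝ᵥ (Q *ᵥ (y + c)) := by simpa using hQpd.posSemidef.dotProduct_mulVec_nonneg (y + c)
  have hsym : ∀ a b : Fin n → ℝ, a ⬝ᵥ (Q *ᵥ b) = b ⬝ᵥ (Q *ᵥ a) := by
    intro a b
    rw [Matrix.dotProduct_mulVec, ← Matrix.mulVec_transpose, hQsym.eq, dotProduct_comm]
  have hcy : c ⬝ᵥ (Q *ᵥ y) = (1/2 : ℝ) * (w ⬝ᵥ y) := by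
    rw [hsym, hc, Matrix.mulVec_smul, dotProduct_smul, hQiw, dotProduct_comm]
    simp [smul_eq_mul]; try ring
  have hyc : y ⬝ᵥ (Q *ᵥ c) = (1/2 : ℝ) * (w ⬝ᵥ y) := by rw [hsym]; exact hcy
  have hcc : c ⬝ᵥ (Q *ᵥ c) = (1/4 : ℝ) * (w ⬝ᵥ (Q⁻¹ *ᵥ w)) := by
    rw [hc, smul_dotProduct, Matrix.mulVec_smul, dotProduct_smul, hQiw,
      dotProduct_comm]
    simp [smul_eq_mul]; try ring
  have hexp : (y + c) ⬝ᵥ (Q *ᵥ (y + c)) =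
      y ⬝ᵥ (Q *ᵥ y) + w ⬝ᵥ y + (1/4 : ℝ) * (w ⬝ᵥ (Q⁻¹ *ᵥ w)) := by
    rw [Matrix.mulVec_add, add_dotProduct, dotProduct_add, dotProduct_add,
      hcy, hyc, hcc]
    ring
  linarith [hexp ▸ hz]

/-- Validity of transferred optimality cuts: if strong duality holds
at the construction point `(b*, d*)` with optimal value `v*` and dual variables
`(μ*, π*)`, `π* ≥ 0`, then with `c* = v* + b*ᵀμ* + d*ᵀπ*`, for every new
right-hand side `(b', d')` the cut value `c* − b'ᵀμ* − d'ᵀπ*` is a lower bound on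
the objective at every feasible point; in particular the dual gap
`v(b', d') − (c* − b'ᵀμ* − d'ᵀπ*)` is nonnegative whenever the subproblem with
right-hand sides `(b', d')` is feasible with optimal value `v(b', d')`. -/
theorem transferred_optimality_cut_valid {n m p : ℕ}
    (Q : Matrix (Fin n) (Fin n) ℝ) (hQsym : Q.IsSymm) (hQpd : Q.PosDef)
    (A : Matrix (Fin m) (Fin n) ℝ) (C : Matrix (Fin p) (Fin n) ℝ)
    (xg : Fin n → ℝ)
    (μs : Fin m → ℝ) (πs : Fin p → ℝ) (hπ : ∀ i, 0 ≤ πs i)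
    (bs : Fin m → ℝ) (ds : Fin p → ℝ) (vs : ℝ)
    (w : Fin n → ℝ) (hw : w = Aᵀ *ᵥ μs + Cᵀ *ᵥ πs)
    (hstrong : vs = -(1 / 4 : ℝ) * (w ⬝ᵥ (Q⁻¹ *ᵥ w)) + xg ⬝ᵥ w - bs ⬝ᵥ μs - ds ⬝ᵥ πs)
    (cs : ℝ) (hcs : cs = vs + bs ⬝ᵥ μs + ds ⬝ᵥ πs) :
    (∀ (b' : Fin m → ℝ) (d' : Fin p → ℝ) (x : Fin n → ℝ),
        A *ᵥ x = b' → (∀ i, (C *ᵥ x) i ≤ d' i) →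
        cs - b' ⬝ᵥ μs - d' ⬝ᵥ πs ≤ (x - xg) ⬝ᵥ (Q *ᵥ (x - xg))) ∧
      (∀ (b' : Fin m → ℝ) (d' : Fin p → ℝ) (v' : ℝ),
        IsGLB {y : ℝ | ∃ x : Fin n → ℝ, A *ᵥ x = b' ∧ (∀ i, (C *ᵥ x) i ≤ d' i) ∧
          y = (x - xg) ⬝ᵥ (Q *ᵥ (x - xg))} v' →
        0 ≤ v' - (cs - b' ⬝ᵥ μs - d' ⬝ᵥ πs)) := by
  have main : ∀ (b' : Fin m → ℝ) (d' : Fin p → ℝ) (x : Fin n → ℝ),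
      A *ᵥ x = b' → (∀ i, (C *ᵥ x) i ≤ d' i) →
      cs - b' ⬝ᵥ μs - d' ⬝ᵥ πs ≤ (x - xg) ⬝ᵥ (Q *ᵥ (x - xg)) := by
    intro b' d' x hxb hxd
    have hkey := quad_key Q hQsym hQpd (x - xg) w
    have hwy : w ⬝ᵥ (x - xg) = w ⬝ᵥ x - w ⬝ᵥ xg := dotProduct_sub w x xg
    have hA : (Aᵀ *ᵥ μs) ⬝ᵥ x = μs ⬝ᵥ (A *ᵥ x) := by
      rw [Matrix.mulVec_transpose, ← Matrix.dotProduct_mulVec]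
    have hC : (Cᵀ *ᵥ πs) ⬝ᵥ x = πs ⬝ᵥ (C *ᵥ x) := by
      rw [Matrix.mulVec_transpose, ← Matrix.dotProduct_mulVec]
    have hwx : w ⬝ᵥ x = μs ⬝ᵥ (A *ᵥ x) + πs ⬝ᵥ (C *ᵥ x) := by
      rw [hw, add_dotProduct, hA, hC]
    have hb : μs ⬝ᵥ (A *ᵥ x) = b' ⬝ᵥ μs := by rw [hxb, dotProduct_comm]
    have hd : πs ⬝ᵥ (C *ᵥ x) ≤ d' ⬝ᵥ πs := by
      rw [dotProduct_comm d' πs]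
      exact Finset.sum_le_sum fun i _ =>
        mul_le_mul_of_nonneg_left (hxd i) (hπ i)
    have hxgw : xg ⬝ᵥ w = w ⬝ᵥ xg := dotProduct_comm xg w
    rw [hcs, hstrong]
    linarith
  refine ⟨main, fun b' d' v' hglb => ?_⟩
  have := hglb.2 (fun y hy => by
    obtain ⟨x, hxb, hxd, rfl⟩ := hy
    exact main b' d' x hxb hxd)
  linarith
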